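/- Let A⁰, A¹ be n×n real matrices and u₀ ∈ ℝⁿ with ⟨u₀, u₀⟩ = 1, such that ker A⁰ is one-dimensional and spanned by u₀, and let u₁ ∈ ℝⁿ satisfy A¹u₀ + A⁰u₁ = 0. Then the kernel of the linear map S : ℝⁿ × ℝ → ℝⁿ × ℝ, S(u, ν) = (A⁰u + νA¹u₀, 2⟨u, u₀⟩), is one-dimensional and is spanned by the vector (u₁ − ⟨u₁, u₀⟩u₀, 1). -/
import Mathlib


open Matrix

/-- Kernel of the linearization of the bordered eigenvalue problem at a simple double
root: the kernel of `S(u, ν) = (A⁰u + νA¹u₀, 2⟨u, u₀⟩)` is one-dimensional, spanned by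
`(u₁ − ⟨u₁, u₀⟩u₀, 1)`. -/
theorem stmt10 (n : ℕ) (A0 A1 : Matrix (Fin n) (Fin n) ℝ)
    (u₀ : Fin n → ℝ) (hnorm : u₀ ⬝ᵥ u₀ = 1)
    (hker : LinearMap.ker A0.mulVecLin = Submodule.span ℝ {u₀})
    (u₁ : Fin n → ℝ) (hchain : A1 *ᵥ u₀ + A0 *ᵥ u₁ = 0)
    (S : (Fin n → ℝ) × ℝ → (Fin n → ℝ) × ℝ)
    (hS : ∀ (u : Fin n → ℝ) (ν : ℝ),
      S (u, ν) = (A0 *ᵥ u + ν • (A1 *ᵥ u₀), 2 * (u ⬝ᵥ u₀))) :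
    {p : (Fin n → ℝ) × ℝ | S p = 0} =
      {p : (Fin n → ℝ) × ℝ | ∃ t : ℝ, p = t • (u₁ - (u₁ ⬝ᵥ u₀) • u₀, (1 : ℝ))} := by
  have hA0u₀ : A0 *ᵥ u₀ = 0 := by
    have : u₀ ∈ LinearMap.ker A0.mulVecLin := by
      rw [hker]; exact Submodule.mem_span_singleton_self u₀
    simpa using this
  have hA1u₀ : A1 *ᵥ u₀ = -(A0 *ᵥ u₁) := by
    linear_combination (norm := module) hchain
  ext ⟨u, ν⟩
  simp only [Set.mem_setOf_eq, hS, Prod.ext_iff, Prod.fst_zero, Prod.snd_zero,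
    Prod.smul_mk, smul_eq_mul, mul_one]
  constructor
  · rintro ⟨h1, h2'⟩
    have h2 : u ⬝ᵥ u₀ = 0 := by linarith
    refine ⟨ν, ?_, rfl⟩
    have hk : u - ν • u₁ ∈ LinearMap.ker A0.mulVecLin := by
      simp only [LinearMap.mem_ker, mulVecLin_apply]
      rw [hA1u₀] at h1
      rw [Matrix.mulVec_sub, Matrix.mulVec_smul]
      linear_combination (norm := module) h1
    rw [hker, Submodule.mem_span_singleton] at hk
    obtain ⟨c, hc⟩ := hk
    have hdot : (u - ν • u₁) ⬝ᵥ u₀ = c := by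
      rw [← hc, smul_dotProduct, hnorm, smul_eq_mul, mul_one]
    rw [sub_dotProduct, smul_dotProduct, h2, smul_eq_mul] at hdot
    have hu : u = ν • u₁ + c • u₀ := by
      linear_combination (norm := module) hc.symm
    rw [hu]
    have hc' : c = -(ν * (u₁ ⬝ᵥ u₀)) := by linarith
    rw [hc']
    module
  · rintro ⟨t, hu, hν⟩
    subst hν hu
    constructor
    · rw [Matrix.mulVec_smul, Matrix.mulVec_sub, Matrix.mulVec_smul, hA0u₀, hA1u₀]
      module
    · rw [smul_dotProduct, sub_dotProduct, smul_dotProduct, hnorm]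
      simp only [smul_eq_mul]
      ring
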